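/- Let E be the encoding matrix of a c-splitting authentication code with b uniformly distributed keys, k sources, v messages, such that every message occurs exactly bc/v times in each column of E. Then the dual code, whose encoding matrix F has entry F(m,s) = {K : m ∈ E(K,s)}, is a (bc/v)-splitting authentication code with v keys and b messages in which every 'message' (original key) occurs exactly c times in each column of F. -/
import Mathlib


open Finset

theorem stmt_17 (b k v c : ℕ)
    (E : Fin b → Fin k → Finset (Fin v))
    (hcard : ∀ K s, (E K s).card = c)
    (hdisj : ∀ K : Fin b, ∀ s s' : Fin k, s ≠ s' → Disjoint (E K s) (E K s'))
    (hcol : ∀ (s : Fin k) (m : Fin v),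
      (univ.filter fun K : Fin b => m ∈ E K s).card * v = b * c)
    (F : Fin v → Fin k → Finset (Fin b))
    (hF : ∀ m s, F m s = univ.filter fun K : Fin b => m ∈ E K s) :
    (∀ (m : Fin v) (s : Fin k), (F m s).card * v = b * c) ∧
      (∀ m : Fin v, ∀ s s' : Fin k, s ≠ s' → Disjoint (F m s) (F m s')) ∧
      (∀ (K : Fin b) (s : Fin k),
        (univ.filter fun m : Fin v => K ∈ F m s).card = c) := by
  refine ⟨fun m s => by rw [hF]; exact hcol s m, fun m s s' hss' => ?_, fun K s => ?_⟩
  · rw [hF, hF, Finset.disjoint_left]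
    intro K hK hK'
    simp only [mem_filter] at hK hK'
    exact Finset.disjoint_left.mp (hdisj K s s' hss') hK.2 hK'.2
  · have : (univ.filter fun m : Fin v => K ∈ F m s) = E K s := by
      ext m; simp [hF]
    rw [this, hcard]
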